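/- In the Cartesian tree of an array A of distinct values, for any query range [i,j] with i ≤ j, the index of the second smallest element of A[i..j] lies either in the left inner spine or the right inner spine of the node v = RMQ(i,j). -/

import Mathlib

inductive BT where
  | leaf : BT
  | node : BT → BT → BT
deriving DecidableEq

namespace BT

/-- Number of nodes. -/
def size : BT → ℕ
  | leaf => 0
  | node l r => l.size + r.size + 1

/-- Inorder list of node positions (paths from the root; `false` = left step). -/
def inList : BT → List (List Bool)
  | leaf => []
  | node l r => (l.inList).map (List.cons false) ++ [] :: (r.inList).map (List.cons true)

/-- Preorder list of node positions. -/
def preList : BT → List (List Bool)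
  | leaf => []
  | node l r => [] :: ((l.preList).map (List.cons false) ++ (r.preList).map (List.cons true))

/-- Subtree rooted at a given position, if the position is valid. -/
def subtree? : BT → List Bool → Option BT
  | t, [] => some t
  | leaf, _ :: _ => none
  | node l r, b :: p => if b then r.subtree? p else l.subtree? p

/-- Size of the left spine (maximal path following left children, top node included). -/
def Lspine : BT → ℕ
  | leaf => 0
  | node l _ => l.Lspine + 1

/-- Size of the right spine. -/
def Rspine : BT → ℕ
  | leaf => 0
  | node _ r => r.Rspine + 1

/-- Size of the left inner spine of the root: right spine of the left child. -/
def lv : BT → ℕ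
  | leaf => 0
  | node l _ => l.Rspine

/-- Size of the right inner spine of the root: left spine of the right child. -/
def rv : BT → ℕ
  | leaf => 0
  | node _ r => r.Lspine

/-- Sum of `f` over all (sub)trees rooted at nodes of the tree. -/
def sumNodes (f : BT → ℕ) : BT → ℕ
  | leaf => 0
  | node l r => f (node l r) + sumNodes f l + sumNodes f r

/-- Number of leaf nodes (nodes with no children). -/
def leaves : BT → ℕ
  | leaf => 0
  | node leaf leaf => 1
  | node l r => leaves l + leaves r

end BT

/-- Longest common prefix of two paths: the LCA of two positions in a binary tree. -/
def lcp : List Bool → List Bool → List Bool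
  | a :: p, b :: q => if a = b then a :: lcp p q else []
  | _, _ => []

/-- Index of the minimum element of a list (0 if empty). -/
def minIdx {α : Type*} [LinearOrder α] (l : List α) : ℕ :=
  match l.argmin id with
  | none => 0
  | some a => l.idxOf a

/-- Cartesian tree construction with fuel. -/
def cartesianAux {α : Type*} [LinearOrder α] : ℕ → List α → BT
  | 0, _ => .leaf
  | _ + 1, [] => .leaf
  | n + 1, l@(_ :: _) =>
      .node (cartesianAux n (l.take (minIdx l))) (cartesianAux n (l.drop (minIdx l + 1)))

/-- The Cartesian tree of a list: root at the position of the minimum,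
recursively built on the prefix before and the suffix after the minimum. -/
def cartesian {α : Type*} [LinearOrder α] (l : List α) : BT :=
  cartesianAux l.length l

/-- `k` is the position of the minimum of `A` on the range `[i, j]`. -/
def isArgmin {α : Type*} [LinearOrder α] {n : ℕ} (A : Fin n → α) (i j k : Fin n) : Prop :=
  i ≤ k ∧ k ≤ j ∧ ∀ m, i ≤ m → m ≤ j → A k ≤ A m

/-- `k` is the position of the second smallest element of `A` on the range `[i, j]`. -/
def isSecondMin {α : Type*} [LinearOrder α] {n : ℕ} (A : Fin n → α) (i j k : Fin n) : Prop :=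
  i ≤ k ∧ k ≤ j ∧
    ∃ m, isArgmin A i j m ∧ k ≠ m ∧ ∀ l, i ≤ l → l ≤ j → l ≠ m → A k ≤ A l

/-- The node with inorder number `i` in `t` has a left child. -/
def hasLeftChildAt (t : BT) (i : ℕ) : Prop :=
  ∃ (p : List Bool) (ll lr r : BT),
    t.inList[i]? = some p ∧ t.subtree? p = some (.node (.node ll lr) r)

section Aux
variable {α : Type*} [LinearOrder α]

lemma minIdx_lt_length {l : List α} (h : l ≠ []) : minIdx l < l.length := by
  unfold minIdx
  cases hm : l.argmin id with
  | none => exact absurd (List.argmin_eq_none.mp hm) h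
  | some a => simpa using List.idxOf_lt_length_iff.mpr (List.argmin_mem hm)

lemma getElem_minIdx_le {l : List α} (h : l ≠ []) {k : ℕ} (hk : k < l.length)
    (hμ : minIdx l < l.length) : l[minIdx l] ≤ l[k] := by
  cases hm : l.argmin id with
  | none => exact absurd (List.argmin_eq_none.mp hm) h
  | some a =>
    have he : minIdx l = l.idxOf a := by simp [minIdx, hm]
    simp only [he] at hμ ⊢
    rw [List.getElem_idxOf hμ]
    exact List.le_of_mem_argmin (l.getElem_mem hk) hm

lemma cartesianAux_congr : ∀ (f g : ℕ) (l : List α), l.length ≤ f → l.length ≤ g →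
    cartesianAux f l = cartesianAux g l := by
  intro f
  induction f with
  | zero =>
    intro g l hf hg
    have : l = [] := List.eq_nil_of_length_eq_zero (Nat.le_zero.mp hf)
    subst this
    cases g <;> rfl
  | succ f ih =>
    intro g l hf hg
    cases l with
    | nil => cases g <;> rfl
    | cons x xs =>
      cases g with
      | zero => simp at hg
      | succ g =>
        have hne : (x :: xs : List α) ≠ [] := by simp
        have hμ := minIdx_lt_length hne
        simp only [List.length_cons] at hf hg hμ
        simp only [cartesianAux]
        rw [ih g _ (by simp [List.length_take]; omega) (by simp [List.length_take]; omega),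
            ih g _ (by simp; omega) (by simp; omega)]

lemma cartesian_ne_nil {l : List α} (h : l ≠ []) :
    cartesian l = .node (cartesian (l.take (minIdx l))) (cartesian (l.drop (minIdx l + 1))) := by
  obtain ⟨x, xs, rfl⟩ := List.exists_cons_of_ne_nil h
  have hμ := minIdx_lt_length h
  simp only [List.length_cons] at hμ
  show cartesianAux (xs.length + 1) _ = _
  simp only [cartesianAux, cartesian]
  exact congrArg₂ BT.node
    (cartesianAux_congr _ _ _ (by simp [List.length_take] <;> omega) le_rfl)
    (cartesianAux_congr _ _ _ (by simp <;> omega) le_rfl)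

lemma size_cartesian (l : List α) : (cartesian l).size = l.length := by
  suffices H : ∀ n (l : List α), l.length ≤ n → (cartesian l).size = l.length from
    H l.length l le_rfl
  intro n
  induction n with
  | zero =>
    intro l hl
    have : l = [] := List.eq_nil_of_length_eq_zero (Nat.le_zero.mp hl)
    subst this; rfl
  | succ n ih =>
    intro l hl
    rcases eq_or_ne l [] with rfl | hne
    · rfl
    · have hμ := minIdx_lt_length hne
      rw [cartesian_ne_nil hne]
      simp only [BT.size]
      rw [ih _ (by simp [List.length_take] <;> omega), ih _ (by simp <;> omega)]
      simp [List.length_take] <;> omega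

lemma length_inList : ∀ (t : BT), t.inList.length = t.size := by
  intro t
  induction t with
  | leaf => rfl
  | node l r ihl ihr => simp [BT.inList, BT.size, ihl, ihr]; omega

lemma inList_node_lt {l r : BT} {k : ℕ} (hk : k < l.size) :
    (BT.node l r).inList[k]? = (l.inList[k]?).map (List.cons false) := by
  rw [BT.inList, List.getElem?_append_left (by simp [length_inList, hk]),
      List.getElem?_map]

lemma inList_node_eq {l r : BT} :
    (BT.node l r).inList[l.size]? = some [] := by
  rw [BT.inList, List.getElem?_append_right (by simp [length_inList])]
  simp [length_inList]

lemma inList_node_eq' {l r : BT} {k : ℕ} (h : k = l.size) :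
    (BT.node l r).inList[k]? = some [] := h ▸ inList_node_eq

lemma inList_node_gt {l r : BT} {k : ℕ} (hk : l.size < k) :
    (BT.node l r).inList[k]? = (r.inList[k - l.size - 1]?).map (List.cons true) := by
  rw [BT.inList, List.getElem?_append_right (by simp [length_inList]; omega)]
  have : k - (l.inList.map (List.cons false)).length = (k - l.size - 1) + 1 := by
    simp [length_inList]; omega
  rw [this]
  simp

lemma getElem_drop' {L : List α} {n k : ℕ} (h : k < (L.drop n).length) :
    (L.drop n)[k] = L[n+k]'(by simp at h; omega) := by
  have := List.getElem?_drop (xs := L) (i := n) (j := k)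
  rw [List.getElem?_eq_getElem h, List.getElem?_eq_getElem (by simp at h; omega)] at this
  exact Option.some.inj this

lemma getElem_take' {L : List α} {n k : ℕ} (h : k < n) (h2 : k < L.length) :
    (L.take n)[k]'(by simp [List.length_take]; omega) = L[k] := by
  have := List.getElem?_take_of_lt (l := L) (j := n) (i := k) h
  rw [List.getElem?_eq_getElem (by simp [List.length_take]; omega), List.getElem?_eq_getElem h2] at this
  exact Option.some.inj this

lemma size_cartesian_take {L : List α} (h : minIdx L < L.length) :
    (cartesian (L.take (minIdx L))).size = minIdx L := by
  rw [size_cartesian]; simp [List.length_take]; omega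

lemma spineR : ∀ (n : ℕ) (L : List α), L.length ≤ n → L.Nodup → ∀ (i s : ℕ)
    (hs : s < L.length), i ≤ s →
    (∀ m (hm : m < L.length), i ≤ m → L[s] ≤ L[m]) →
    ∃ m, (cartesian L).inList[s]? = some (List.replicate m true) := by
  intro n
  induction n with
  | zero => intro L hL _ i s hs; omega
  | succ n ih =>
    intro L hL hnd i s hs his hmin
    have hne : L ≠ [] := by intro h; subst h; simp at hs
    have hμ := minIdx_lt_length hne
    have hls := size_cartesian_take hμ
    rcases le_or_gt i (minIdx L) with hiμ | hiμ
    · have h1 : L[s] ≤ L[minIdx L] := hmin _ hμ hiμ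
      have h2 : L[minIdx L] ≤ L[s] := getElem_minIdx_le hne hs hμ
      have hsμ : s = minIdx L := (hnd.getElem_inj_iff).mp (le_antisymm h1 h2)
      refine ⟨0, ?_⟩
      rw [cartesian_ne_nil hne, inList_node_eq' (by rw [hsμ, hls])]
      rfl
    · have hsμ : minIdx L < s := lt_of_lt_of_le hiμ his
      obtain ⟨m, hm⟩ := ih (L.drop (minIdx L + 1)) (by simp; omega)
        (List.Nodup.sublist (List.drop_sublist _ _) hnd) (i - minIdx L - 1) (s - minIdx L - 1)
        (by simp; omega) (by omega)
        (fun m' hm' him' => by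
          rw [getElem_drop', getElem_drop']
          have e1 : minIdx L + 1 + (s - minIdx L - 1) = s := by omega
          simp only [e1]
          simp only [List.length_drop] at hm'
          exact hmin (minIdx L + 1 + m') (by omega) (by omega))
      refine ⟨m + 1, ?_⟩
      rw [cartesian_ne_nil hne, inList_node_gt (by rw [hls]; omega), hls, hm]
      simp [List.replicate_succ]

lemma spineL : ∀ (n : ℕ) (L : List α), L.length ≤ n → L.Nodup → ∀ (j s : ℕ)
    (hj : j < L.length) (hsj : s ≤ j),
    (∀ m (hm : m < L.length), m ≤ j → L[s]'(lt_of_le_of_lt hsj hj) ≤ L[m]) →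
    ∃ m, (cartesian L).inList[s]? = some (List.replicate m false) := by
  intro n
  induction n with
  | zero => intro L hL _ j s hj; omega
  | succ n ih =>
    intro L hL hnd j s hj hsj hmin
    have hs : s < L.length := lt_of_le_of_lt hsj hj
    have hne : L ≠ [] := by intro h; subst h; simp at hs
    have hμ := minIdx_lt_length hne
    have hls := size_cartesian_take hμ
    rcases le_or_gt (minIdx L) j with hjμ | hjμ
    · have h1 : L[s] ≤ L[minIdx L] := hmin _ hμ hjμ
      have h2 : L[minIdx L] ≤ L[s] := getElem_minIdx_le hne hs hμ
      have hsμ : s = minIdx L := (hnd.getElem_inj_iff).mp (le_antisymm h1 h2)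
      refine ⟨0, ?_⟩
      rw [cartesian_ne_nil hne, inList_node_eq' (by rw [hsμ, hls])]
      rfl
    · have hsμ : s < minIdx L := lt_of_le_of_lt hsj hjμ
      have htl : (L.take (minIdx L)).length = minIdx L := by simp [List.length_take]; omega
      obtain ⟨m, hm⟩ := ih (L.take (minIdx L)) (by rw [htl]; omega)
        (List.Nodup.sublist (List.take_sublist _ _) hnd) j s
        (by rw [htl]; exact hjμ) hsj
        (fun m' hm' hmj' => by
          rw [htl] at hm'
          rw [getElem_take' hsμ hs, getElem_take' (by omega) (by omega)]
          exact hmin m' (by omega) hmj')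
      refine ⟨m + 1, ?_⟩
      rw [cartesian_ne_nil hne, inList_node_lt (by rw [hls]; omega), hm]
      simp [List.replicate_succ]

lemma map_cons_eq_some {b : Bool} {o : Option (List Bool)} {q : List Bool}
    (h : o.map (List.cons b) = some q) : ∃ q', o = some q' ∧ q = b :: q' := by
  cases o with
  | none => simp at h
  | some a => exact ⟨a, rfl, (Option.some.inj h).symm⟩

lemma mainLemma : ∀ (n : ℕ) (L : List α), L.length ≤ n → L.Nodup →
    ∀ (i j k s : ℕ) (hj : j < L.length) (hik : i ≤ k) (hkj : k ≤ j)
    (his : i ≤ s) (hsj : s ≤ j) (hsk : s ≠ k),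
    (∀ m (hm : m < L.length), i ≤ m → m ≤ j → L[k]'(lt_of_le_of_lt hkj hj) ≤ L[m]) →
    (∀ m (hm : m < L.length), i ≤ m → m ≤ j → m ≠ k → L[s]'(lt_of_le_of_lt hsj hj) ≤ L[m]) →
    ∀ (p q : List Bool),
    (cartesian L).inList[k]? = some p →
    (cartesian L).inList[s]? = some q →
    (∃ m, q = p ++ false :: List.replicate m true) ∨
    (∃ m, q = p ++ true :: List.replicate m false) := by
  intro n
  induction n with
  | zero => intro L hL _ i j k s hj; omega
  | succ n ih =>
    intro L hL hnd i j k s hj hik hkj his hsj hsk hkmin hsmin p q hp hq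
    have hkL : k < L.length := lt_of_le_of_lt hkj hj
    have hsL : s < L.length := lt_of_le_of_lt hsj hj
    have hne : L ≠ [] := by intro h; subst h; simp at hj
    have hμ := minIdx_lt_length hne
    have hls := size_cartesian_take hμ
    have htl : (L.take (minIdx L)).length = minIdx L := by simp [List.length_take]; omega
    have hdl : (L.drop (minIdx L + 1)).length = L.length - minIdx L - 1 := by simp; omega
    rcases eq_or_ne (minIdx L) k with hμk | hμk
    · -- k is the root; p = []
      have hp' : p = [] := by
        rw [cartesian_ne_nil hne, inList_node_eq' (by rw [← hμk, hls])] at hp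
        exact (Option.some.inj hp).symm
      subst hp'
      rcases lt_or_gt_of_ne hsk with hlt | hgt
      · -- s < k : left inner spine
        rw [cartesian_ne_nil hne, inList_node_lt (by rw [hls]; omega)] at hq
        obtain ⟨q', hq', rfl⟩ := map_cons_eq_some hq
        obtain ⟨m, hm⟩ := spineR (L.take (minIdx L)).length _ le_rfl
          (List.Nodup.sublist (List.take_sublist _ _) hnd) i s
          (by rw [htl]; omega) his
          (fun m' hm' him' => by
            rw [htl] at hm'
            rw [getElem_take' (by omega) hsL, getElem_take' (by omega) (by omega)]
            exact hsmin m' (by omega) him' (by omega) (by omega))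
        rw [hm] at hq'
        exact Or.inl ⟨m, by simp [Option.some.inj hq']⟩
      · -- s > k : right inner spine
        rw [cartesian_ne_nil hne, inList_node_gt (by rw [hls]; omega), hls] at hq
        obtain ⟨q', hq', rfl⟩ := map_cons_eq_some hq
        obtain ⟨m, hm⟩ := spineL (L.drop (minIdx L + 1)).length _ le_rfl
          (List.Nodup.sublist (List.drop_sublist _ _) hnd) (j - minIdx L - 1) (s - minIdx L - 1)
          (by rw [hdl]; omega) (by omega)
          (fun m' hm' hmj' => by
            rw [getElem_drop', getElem_drop']
            have e1 : minIdx L + 1 + (s - minIdx L - 1) = s := by omega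
            simp only [e1]
            rw [hdl] at hm'
            exact hsmin (minIdx L + 1 + m') (by omega) (by omega) (by omega) (by omega))
        rw [hm] at hq'
        exact Or.inr ⟨m, by simp [Option.some.inj hq']⟩
    · -- the root is outside [i,j]
      have hμout : minIdx L < i ∨ j < minIdx L := by
        by_contra h
        push_neg at h
        have h1 : L[k] ≤ L[minIdx L] := hkmin _ hμ h.1 h.2
        have h2 : L[minIdx L] ≤ L[k] := getElem_minIdx_le hne hkL hμ
        exact hμk ((hnd.getElem_inj_iff).mp (le_antisymm h2 h1))
      rcases hμout with hlt | hgt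
      · -- [i,j] is inside the right subtree
        rw [cartesian_ne_nil hne, inList_node_gt (by rw [hls]; omega), hls] at hp hq
        obtain ⟨p', hp', rfl⟩ := map_cons_eq_some hp
        obtain ⟨q', hq', rfl⟩ := map_cons_eq_some hq
        have e1 : minIdx L + 1 + (k - minIdx L - 1) = k := by omega
        have e2 : minIdx L + 1 + (s - minIdx L - 1) = s := by omega
        have := ih (L.drop (minIdx L + 1)) (by rw [hdl]; omega)
          (List.Nodup.sublist (List.drop_sublist _ _) hnd)
          (i - minIdx L - 1) (j - minIdx L - 1) (k - minIdx L - 1) (s - minIdx L - 1)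
          (by rw [hdl]; omega) (by omega) (by omega) (by omega) (by omega) (by omega)
          (fun m' hm' him' hmj' => by
            rw [getElem_drop', getElem_drop']
            simp only [e1]
            rw [hdl] at hm'
            exact hkmin (minIdx L + 1 + m') (by omega) (by omega) (by omega))
          (fun m' hm' him' hmj' hmk' => by
            rw [getElem_drop', getElem_drop']
            simp only [e2]
            rw [hdl] at hm'
            exact hsmin (minIdx L + 1 + m') (by omega) (by omega) (by omega) (by omega))
          p' q' hp' hq'
        rcases this with ⟨m, hm⟩ | ⟨m, hm⟩
        · exact Or.inl ⟨m, by simp [hm]⟩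
        · exact Or.inr ⟨m, by simp [hm]⟩
      · -- [i,j] is inside the left subtree
        rw [cartesian_ne_nil hne, inList_node_lt (by rw [hls]; omega)] at hp hq
        obtain ⟨p', hp', rfl⟩ := map_cons_eq_some hp
        obtain ⟨q', hq', rfl⟩ := map_cons_eq_some hq
        have := ih (L.take (minIdx L)) (by rw [htl]; omega)
          (List.Nodup.sublist (List.take_sublist _ _) hnd)
          i j k s (by rw [htl]; omega) hik hkj his hsj hsk
          (fun m' hm' him' hmj' => by
            rw [htl] at hm'
            rw [getElem_take' (by omega) hkL, getElem_take' (by omega) (by omega)]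
            exact hkmin m' (by omega) him' hmj')
          (fun m' hm' him' hmj' hmk' => by
            rw [htl] at hm'
            rw [getElem_take' (by omega) hsL, getElem_take' (by omega) (by omega)]
            exact hsmin m' (by omega) him' hmj' hmk')
          p' q' hp' hq'
        rcases this with ⟨m, hm⟩ | ⟨m, hm⟩
        · exact Or.inl ⟨m, by simp [hm]⟩
        · exact Or.inr ⟨m, by simp [hm]⟩

end Aux

/-- In the Cartesian tree of an array of distinct values, the index of the second
smallest element of `A[i..j]` lies on the left inner spine or the right inner spine of
the node `k = RMQ(i,j)` (whose position is `p`). -/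
theorem stmt9 {α : Type*} [LinearOrder α] {n : ℕ} (A : Fin n → α)
    (hA : Function.Injective A) (i j k s : Fin n) (hij : i < j)
    (hk : isArgmin A i j k) (hs : isSecondMin A i j s)
    (p q : List Bool)
    (hp : (cartesian (List.ofFn A)).inList[(k : ℕ)]? = some p)
    (hq : (cartesian (List.ofFn A)).inList[(s : ℕ)]? = some q) :
    (∃ m : ℕ, q = p ++ false :: List.replicate m true) ∨
    (∃ m : ℕ, q = p ++ true :: List.replicate m false) := by
  have hnd : (List.ofFn A).Nodup := List.nodup_ofFn.mpr hA
  obtain ⟨hk1, hk2, hk3⟩ := hk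
  obtain ⟨hs1, hs2, m, hm, hsm, hs3⟩ := hs
  have hmk : m = k := by
    have h1 : A k ≤ A m := hk3 m hm.1 hm.2.1
    have h2 : A m ≤ A k := hm.2.2 k hk1 hk2
    exact hA (le_antisymm h2 h1)
  rw [hmk] at hsm hs3
  have hL : (List.ofFn A).length = n := List.length_ofFn (f := A)
  refine mainLemma (List.ofFn A).length (List.ofFn A) le_rfl hnd i j k s
    (by rw [hL]; exact j.isLt) hk1 hk2 hs1 hs2
    (fun h => hsm (Fin.ext h)) ?_ ?_ p q hp hq
  · intro m' hm' him' hmj'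
    rw [List.getElem_ofFn, List.getElem_ofFn]
    exact hk3 ⟨m', by omega⟩ him' hmj'
  · intro m' hm' him' hmj' hmk'
    rw [List.getElem_ofFn, List.getElem_ofFn]
    exact hs3 ⟨m', by omega⟩ him' hmj' (fun h => hmk' (congrArg Fin.val h))
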